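/- Let 𝒳 = {X_1, …, X_t} be a finite set of events in a probability space with a negative dependency graph D = (𝒳, E), and let Δ(D) denote the maximum degree of D. If P(X_i) < 1/(e·(Δ(D)+1)) for all i ∈ [t], where e is Euler's number, then P(⋂_{i∈[t]} X_iᶜ) > 0. -/

import Mathlib

open MeasureTheory

/-- `D` is a negative dependency graph for the events `X i` with respect to `μ`:
every event is "negatively dependent" on any collection of events outside its closed
neighbourhood in `D`. -/
def IsNegDepGraph {Ω : Type*} [MeasurableSpace Ω] (μ : Measure Ω) {t : ℕ}
    (X : Fin t → Set Ω) (D : SimpleGraph (Fin t)) : Prop :=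
  ∀ (i : Fin t) (Z : Finset (Fin t)), (∀ j ∈ Z, j ≠ i ∧ ¬ D.Adj i j) →
    μ (X i ∩ ⋂ j ∈ Z, (X j)ᶜ) ≤ μ (X i) * μ (⋂ j ∈ Z, (X j)ᶜ)

lemma lll_aux_real (Δ : ℕ) :
    1 / (Real.exp 1 * (Δ + 1)) ≤ (1/(Δ+2:ℝ)) * (1 - 1/(Δ+2:ℝ))^Δ := by
  set u : ℝ := Δ + 1 with hu_def
  set v : ℝ := Δ + 2 with hv_def
  have hu : (0:ℝ) < u := by positivity
  have hv : (0:ℝ) < v := by positivity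
  have h1 : v / u ≤ Real.exp (1/u) := by
    have h := Real.add_one_le_exp (1/u)
    have : v / u = 1/u + 1 := by field_simp [hv_def, hu_def]; ring
    linarith
  have h2 : (v/u)^(Δ+1) ≤ Real.exp 1 := by
    calc (v/u)^(Δ+1) ≤ (Real.exp (1/u))^(Δ+1) :=
          pow_le_pow_left₀ (by positivity) h1 _
      _ = Real.exp (((Δ+1 : ℕ)) * (1/u)) := (Real.exp_nat_mul _ _).symm
      _ = Real.exp 1 := by
          congr 1
          push_cast
          field_simp [hu_def]
          exact hu_def.symm
  have h3 : v^(Δ+1) ≤ Real.exp 1 * u^(Δ+1) := by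
    rw [div_pow, div_le_iff₀ (by positivity)] at h2
    linarith
  have hxv : (1:ℝ) - 1/v = u/v := by
    field_simp [hv_def, hu_def]
    ring
  rw [hxv]
  have hrhs : (1/v) * (u/v)^Δ = u^Δ / v^(Δ+1) := by
    rw [div_pow]
    field_simp
    ring
  rw [hrhs, div_le_div_iff₀ (by positivity) (by positivity), one_mul]
  have : u^Δ * (Real.exp 1 * u) = Real.exp 1 * u^(Δ+1) := by ring
  linarith [h3, this]

/-- **Lovász local lemma, symmetric version** (Lemma 9(i)): if each event has probability
less than `1/(e·(Δ(D)+1))`, where `D` is a negative dependency graph with maximum degree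
`Δ(D)`, then with positive probability no event occurs. -/
theorem local_lemma_symmetric
    {Ω : Type*} [MeasurableSpace Ω] (μ : Measure Ω) [IsProbabilityMeasure μ]
    {t : ℕ} (X : Fin t → Set Ω) (hmeas : ∀ i, MeasurableSet (X i))
    (D : SimpleGraph (Fin t)) [DecidableRel D.Adj]
    (hD : IsNegDepGraph μ X D)
    (hP : ∀ i, μ (X i) < ENNReal.ofReal (1 / (Real.exp 1 * (D.maxDegree + 1)))) :
    0 < μ (⋂ i, (X i)ᶜ) := by
  set Δ := D.maxDegree with hΔ
  set xr : ℝ := 1 / (Δ + 2) with hxr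
  have hx0 : 0 < xr := by positivity
  have hx1 : xr < 1 := by
    rw [hxr, div_lt_one (by positivity)]
    have : (0:ℝ) ≤ (Δ:ℝ) := Nat.cast_nonneg _
    linarith
  set a : ENNReal := ENNReal.ofReal xr with ha_def
  set b : ENNReal := ENNReal.ofReal (1 - xr) with hb_def
  have hab : a + b = 1 := by
    rw [ha_def, hb_def, ← ENNReal.ofReal_add hx0.le (by linarith)]
    norm_num
  have ha_top : a ≠ ⊤ := ENNReal.ofReal_ne_top
  have hb1 : b ≤ 1 := by
    rw [hb_def]
    exact ENNReal.ofReal_le_one.2 (by linarith)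
  have hb0 : 0 < b := by
    rw [hb_def]
    exact ENNReal.ofReal_pos.2 (by linarith)
  -- each event probability is at most a * b ^ Δ
  have hPa : ∀ i, μ (X i) ≤ a * b ^ Δ := by
    intro i
    refine le_trans (hP i).le ?_
    rw [ha_def, hb_def, ← ENNReal.ofReal_pow (by linarith),
      ← ENNReal.ofReal_mul hx0.le]
    exact ENNReal.ofReal_le_ofReal (lll_aux_real Δ)
  -- measurability of intersections
  have hCmeas : ∀ T : Finset (Fin t), MeasurableSet (⋂ j ∈ T, (X j)ᶜ) :=
    fun T => MeasurableSet.biInter (Set.to_countable _) fun j _ => (hmeas j).compl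
  -- key induction
  have key : ∀ n : ℕ, ∀ i : Fin t, ∀ Z : Finset (Fin t), Z.card ≤ n → i ∉ Z →
      μ (X i ∩ ⋂ j ∈ Z, (X j)ᶜ) ≤ a * μ (⋂ j ∈ Z, (X j)ᶜ) := by
    intro n
    induction n with
    | zero =>
        intro i Z hcard _
        have hZe : Z = ∅ := Finset.card_eq_zero.1 (Nat.le_zero.1 hcard)
        subst hZe
        simp only [Finset.notMem_empty, Set.iInter_of_empty, Set.iInter_univ,
          Set.inter_univ, measure_univ, mul_one]
        calc μ (X i) ≤ a * b ^ Δ := hPa i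
          _ ≤ a * 1 := mul_le_mul_right (pow_le_one₀ zero_le hb1) a
          _ = a := mul_one a
    | succ n IH =>
        intro i Z hcard hiZ
        set Z₁ := Z.filter (fun j => D.Adj i j) with hZ₁
        set Z₂ := Z.filter (fun j => ¬ D.Adj i j) with hZ₂
        have hunion : Z₂ ∪ Z₁ = Z := by
          rw [hZ₁, hZ₂, Finset.union_comm]
          exact Finset.filter_union_filter_not_eq _ Z
        -- peeling step
        have step : ∀ S : Finset (Fin t), S ⊆ Z₁ →
            b ^ S.card * μ (⋂ j ∈ Z₂, (X j)ᶜ) ≤ μ (⋂ j ∈ Z₂ ∪ S, (X j)ᶜ) := by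
          intro S
          induction S using Finset.induction_on with
          | empty => simp
          | @insert j S hjS IH' =>
              intro hsub
              have hsubS : S ⊆ Z₁ := (Finset.subset_insert j S).trans hsub
              have hjZ₁ : j ∈ Z₁ := hsub (Finset.mem_insert_self j S)
              have hjadj : D.Adj i j := (Finset.mem_filter.1 hjZ₁).2
              have hjZ : j ∈ Z := (Finset.mem_filter.1 hjZ₁).1
              have hjnot : j ∉ Z₂ ∪ S := by
                intro h
                rcases Finset.mem_union.1 h with h | h
                · exact (Finset.mem_filter.1 h).2 hjadj
                · exact hjS h
              have hcard' : (Z₂ ∪ S).card ≤ n := by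
                have hsub' : Z₂ ∪ S ⊆ Z.erase j := by
                  intro k hk
                  refine Finset.mem_erase.2 ⟨?_, ?_⟩
                  · rintro rfl; exact hjnot hk
                  · rcases Finset.mem_union.1 hk with h | h
                    · exact Finset.filter_subset _ _ h
                    · exact Finset.filter_subset _ _ (hsubS h)
                calc (Z₂ ∪ S).card ≤ (Z.erase j).card := Finset.card_le_card hsub'
                  _ = Z.card - 1 := Finset.card_erase_of_mem hjZ
                  _ ≤ n := by omega
              have hIH := IH j (Z₂ ∪ S) hcard' hjnot
              set C := ⋂ k ∈ Z₂ ∪ S, (X k)ᶜ with hC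
              have hsplit : μ (C ∩ X j) + μ (C \ X j) = μ C :=
                measure_inter_add_diff C (hmeas j)
              have hXjC : μ (C ∩ X j) ≤ a * μ C := by
                rw [Set.inter_comm]; exact hIH
              have hpeel : b * μ C ≤ μ (C \ X j) := by
                have h1 : a * μ C + b * μ C = μ C := by
                  rw [← add_mul, hab, one_mul]
                have h2 : a * μ C + b * μ C ≤ a * μ C + μ (C \ X j) :=
                  calc a * μ C + b * μ C = μ C := h1
                    _ = μ (C ∩ X j) + μ (C \ X j) := hsplit.symm
                    _ ≤ a * μ C + μ (C \ X j) := add_le_add_left hXjC _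
                exact (ENNReal.add_le_add_iff_left
                  (ENNReal.mul_ne_top ha_top (measure_ne_top μ C))).1 h2
              have heq : (⋂ k ∈ Z₂ ∪ insert j S, (X k)ᶜ) = C \ X j := by
                rw [Finset.union_insert, Set.diff_eq, hC]
                rw [Finset.set_biInter_insert]
                rw [Set.inter_comm]
              rw [heq, Finset.card_insert_of_notMem hjS, pow_succ, mul_comm (b ^ S.card) b,
                mul_assoc]
              calc b * (b ^ S.card * μ (⋂ j ∈ Z₂, (X j)ᶜ)) ≤ b * μ C :=
                    mul_le_mul_right (IH' hsubS) b
                _ ≤ μ (C \ X j) := hpeel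
        -- degree bound
        have hZ₁Δ : Z₁.card ≤ Δ := by
          have : Z₁ ⊆ D.neighborFinset i := by
            intro j hj
            exact (D.mem_neighborFinset i j).2 (Finset.mem_filter.1 hj).2
          calc Z₁.card ≤ (D.neighborFinset i).card := Finset.card_le_card this
            _ = D.degree i := rfl
            _ ≤ Δ := D.degree_le_maxDegree i
        have hsub2 : (⋂ j ∈ Z, (X j)ᶜ) ⊆ ⋂ j ∈ Z₂, (X j)ᶜ := by
          apply Set.biInter_subset_biInter_left
          intro j hj
          exact Finset.filter_subset _ _ hj
        have hneg := hD i Z₂ (by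
          intro j hj
          have hjZ : j ∈ Z := Finset.filter_subset _ _ hj
          exact ⟨fun h => hiZ (h ▸ hjZ), (Finset.mem_filter.1 hj).2⟩)
        calc μ (X i ∩ ⋂ j ∈ Z, (X j)ᶜ)
            ≤ μ (X i ∩ ⋂ j ∈ Z₂, (X j)ᶜ) :=
              measure_mono (Set.inter_subset_inter_right _ hsub2)
          _ ≤ μ (X i) * μ (⋂ j ∈ Z₂, (X j)ᶜ) := hneg
          _ ≤ (a * b ^ Δ) * μ (⋂ j ∈ Z₂, (X j)ᶜ) := mul_le_mul_left (hPa i) _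
          _ = a * (b ^ Δ * μ (⋂ j ∈ Z₂, (X j)ᶜ)) := by ring
          _ ≤ a * (b ^ Z₁.card * μ (⋂ j ∈ Z₂, (X j)ᶜ)) := by
              exact mul_le_mul_right (mul_le_mul_left
                (pow_le_pow_of_le_one zero_le hb1 hZ₁Δ) _) a
          _ ≤ a * μ (⋂ j ∈ Z₂ ∪ Z₁, (X j)ᶜ) :=
              mul_le_mul_right (step Z₁ Finset.Subset.rfl) a
          _ = a * μ (⋂ j ∈ Z, (X j)ᶜ) := by rw [hunion]
  -- final: lower bound b ^ |S| for every S
  have final : ∀ S : Finset (Fin t), b ^ S.card ≤ μ (⋂ j ∈ S, (X j)ᶜ) := by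
    intro S
    induction S using Finset.induction_on with
    | empty => simp
    | @insert j S hjS IH' =>
        have hIH := key S.card j S le_rfl hjS
        set C := ⋂ k ∈ S, (X k)ᶜ with hC
        have hsplit : μ (C ∩ X j) + μ (C \ X j) = μ C :=
          measure_inter_add_diff C (hmeas j)
        have hXjC : μ (C ∩ X j) ≤ a * μ C := by
          rw [Set.inter_comm]; exact hIH
        have hpeel : b * μ C ≤ μ (C \ X j) := by
          have h1 : a * μ C + b * μ C = μ C := by
            rw [← add_mul, hab, one_mul]
          have h2 : a * μ C + b * μ C ≤ a * μ C + μ (C \ X j) :=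
            calc a * μ C + b * μ C = μ C := h1
              _ = μ (C ∩ X j) + μ (C \ X j) := hsplit.symm
              _ ≤ a * μ C + μ (C \ X j) := add_le_add_left hXjC _
          exact (ENNReal.add_le_add_iff_left
            (ENNReal.mul_ne_top ha_top (measure_ne_top μ C))).1 h2
        have heq : (⋂ k ∈ insert j S, (X k)ᶜ) = C \ X j := by
          rw [Finset.set_biInter_insert, Set.diff_eq, Set.inter_comm, hC]
        rw [heq, Finset.card_insert_of_notMem hjS, pow_succ, mul_comm (b ^ S.card) b]
        calc b * b ^ S.card ≤ b * μ C := mul_le_mul_right IH' b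
          _ ≤ μ (C \ X j) := hpeel
  have huniv : (⋂ i, (X i)ᶜ) = ⋂ j ∈ (Finset.univ : Finset (Fin t)), (X j)ᶜ := by
    simp
  rw [huniv]
  calc (0 : ENNReal) < b ^ (Finset.univ : Finset (Fin t)).card := ENNReal.pow_pos hb0 _
    _ ≤ μ (⋂ j ∈ (Finset.univ : Finset (Fin t)), (X j)ᶜ) := final _
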